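/- Let X be a non-separable real Banach space and let P : X → X be a bounded linear operator with P∘P = P. Suppose P = λ·id_X + S for some λ ∈ ℝ and some ω₁-singular bounded operator S : X → X. Then λ = 0 or λ = 1. -/
import Mathlib


/-- A bounded operator `S : Y →L[ℝ] X` is ω₁-singular if it is not an isomorphism on any
non-separable (closed) subspace of `Y`. -/
def OmegaOneSingular {Y X : Type*} [NormedAddCommGroup Y] [NormedSpace ℝ Y]
    [NormedAddCommGroup X] [NormedSpace ℝ X] (S : Y →L[ℝ] X) : Prop :=
  ∀ Z : Subspace ℝ Y, IsClosed (Z : Set Y) →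
    ¬ TopologicalSpace.IsSeparable (Z : Set Y) →
    ¬ ∃ c : ℝ, 0 < c ∧ ∀ z ∈ Z, c * ‖z‖ ≤ ‖S z‖

/-- If `X` is a non-separable Banach space and `P : X → X` is a bounded
projection which is a multiple `lam` of the identity plus an ω₁-singular operator,
then `lam = 0` or `lam = 1`. -/
theorem stmt_8 (X : Type*) [NormedAddCommGroup X] [NormedSpace ℝ X] [CompleteSpace X]
    (hX : ¬ TopologicalSpace.IsSeparable (Set.univ : Set X))
    (P : X →L[ℝ] X) (hP : P.comp P = P)
    (lam : ℝ) (S : X →L[ℝ] X) (hS : OmegaOneSingular S)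
    (hdecomp : P = lam • ContinuousLinearMap.id ℝ X + S) :
    lam = 0 ∨ lam = 1 := by
  by_contra h
  push_neg at h
  obtain ⟨h0, h1⟩ := h
  have hmu : lam ^ 2 - lam ≠ 0 := by
    intro hc
    rcases mul_eq_zero.1 (by ring_nf; linarith [hc] : lam * (lam - 1) = 0) with h' | h'
    · exact h0 h'
    · exact h1 (by linarith)
  set T : X →L[ℝ] X := S + (2 * lam - 1) • ContinuousLinearMap.id ℝ X with hT
  -- key identity: (lam^2 - lam) • x = - T (S x)
  have key : ∀ x : X, (lam ^ 2 - lam) • x = - T (S x) := by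
    intro x
    have := congrArg (fun Q : X →L[ℝ] X => Q x) hP
    simp only [hdecomp, ContinuousLinearMap.comp_apply, ContinuousLinearMap.add_apply,
      ContinuousLinearMap.smul_apply, ContinuousLinearMap.id_apply, map_add, map_smul] at this
    simp only [hT, ContinuousLinearMap.add_apply, ContinuousLinearMap.smul_apply,
      ContinuousLinearMap.id_apply]
    have h2 : (lam ^ 2 - lam) • x = (lam • (lam • x) - lam • x) := by
      rw [smul_smul, ← sub_smul]; ring_nf
    rw [h2]
    have := this
    -- this : lam • (lam • x + S x) + (lam • S x + S (S x)) = lam • x + S x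
    linear_combination (norm := module) this
  have hbound : ∀ x : X, |lam ^ 2 - lam| * ‖x‖ ≤ max ‖T‖ 1 * ‖S x‖ := by
    intro x
    calc |lam ^ 2 - lam| * ‖x‖ = ‖(lam ^ 2 - lam) • x‖ := by rw [norm_smul, Real.norm_eq_abs]
    _ = ‖T (S x)‖ := by rw [key x, norm_neg]
    _ ≤ ‖T‖ * ‖S x‖ := T.le_opNorm _
    _ ≤ max ‖T‖ 1 * ‖S x‖ := by
        apply mul_le_mul_of_nonneg_right (le_max_left _ _) (norm_nonneg _)
  have hMpos : (0 : ℝ) < max ‖T‖ 1 := lt_of_lt_of_le one_pos (le_max_right _ _)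
  apply hS ⊤ (by simp [Submodule.top_coe]) (by simpa [Submodule.top_coe] using hX)
  refine ⟨|lam ^ 2 - lam| / max ‖T‖ 1, div_pos (abs_pos.2 hmu) hMpos, ?_⟩
  intro z _
  rw [div_mul_eq_mul_div, div_le_iff₀ hMpos]
  calc |lam ^ 2 - lam| * ‖z‖ ≤ max ‖T‖ 1 * ‖S z‖ := hbound z
  _ = ‖S z‖ * max ‖T‖ 1 := mul_comm _ _
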